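/- In the three-state example with Ω = {ω₁,ω₂,ω₃}, field 𝒜 = ℳ generated by the partition {{ω₁,ω₂},{ω₃}}, types t(ω₁) = t(ω₂) = (0.9, 0.1, 0) and t(ω₃) = (0,0,1), the probability vector p = (0.1, 0, 0.9) is conglomerable with respect to (ℳ,t) but not disintegrable. -/

import Mathlib

open Finset

/-- Types of the three-state example: `t(ω₁)=t(ω₂)=(0.9,0.1,0)`, `t(ω₃)=(0,0,1)`. -/
noncomputable def tEx : Fin 3 → Fin 3 → ℝ :=
  ![![9/10, 1/10, 0], ![9/10, 1/10, 0], ![0, 0, 1]]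

/-- The probability vector `p = (0.1, 0, 0.9)`. -/
noncomputable def pEx : Fin 3 → ℝ := ![1/10, 0, 9/10]

/-- The field `ℳ` generated by the partition `{{ω₁,ω₂},{ω₃}}`. -/
def MEx : Set (Finset (Fin 3)) := {∅, {0, 1}, {2}, Finset.univ}

lemma sum_fin3 (E : Finset (Fin 3)) (f : Fin 3 → ℝ) :
    ∑ a ∈ E, f a = (if (0:Fin 3) ∈ E then f 0 else 0) +
      (if (1:Fin 3) ∈ E then f 1 else 0) + (if (2:Fin 3) ∈ E then f 2 else 0) := by
  have h := Finset.sum_ite_mem Finset.univ E f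
  rw [Finset.univ_inter] at h
  rw [← h, Fin.sum_univ_three]

/-- `p` is conglomerable with respect to `(ℳ,t)` but not disintegrable. -/
theorem stmt_1 :
    (∀ E : Finset (Fin 3),
      (⨅ ω, ∑ a ∈ E, tEx ω a) ≤ ∑ a ∈ E, pEx a ∧
      (∑ a ∈ E, pEx a) ≤ ⨆ ω, ∑ a ∈ E, tEx ω a) ∧
    ¬ (∀ (E F : Finset (Fin 3)), F ∈ MEx →
        ∑ a ∈ E ∩ F, pEx a = ∑ ω ∈ F, (∑ a ∈ E, tEx ω a) * pEx ω) := by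
  constructor
  · intro E
    constructor
    · obtain ⟨ω, hω⟩ : ∃ ω, ∑ a ∈ E, tEx ω a ≤ ∑ a ∈ E, pEx a := by
        by_cases h2 : (2:Fin 3) ∈ E
        · refine ⟨0, ?_⟩
          rw [sum_fin3, sum_fin3]
          simp only [tEx, pEx, h2, Matrix.cons_val]
          split_ifs <;> first | exact absurd ‹False› not_false | norm_num
        · refine ⟨2, ?_⟩
          rw [sum_fin3, sum_fin3]
          simp only [tEx, pEx, h2, Matrix.cons_val]
          split_ifs <;> first | exact absurd ‹False› not_false | norm_num
      exact le_trans (ciInf_le (Set.Finite.bddBelow (Set.finite_range _)) ω) hω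
    · obtain ⟨ω, hω⟩ : ∃ ω, ∑ a ∈ E, pEx a ≤ ∑ a ∈ E, tEx ω a := by
        by_cases h2 : (2:Fin 3) ∈ E
        · refine ⟨2, ?_⟩
          rw [sum_fin3, sum_fin3]
          simp only [tEx, pEx, h2, Matrix.cons_val]
          split_ifs <;> first | exact absurd ‹False› not_false | norm_num
        · refine ⟨0, ?_⟩
          rw [sum_fin3, sum_fin3]
          simp only [tEx, pEx, h2]
          split_ifs <;> first | exact absurd ‹False› not_false | norm_num
      exact le_trans hω (le_ciSup (f := fun ω => ∑ a ∈ E, tEx ω a) (Set.Finite.bddAbove (Set.finite_range _)) ω)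
  · intro h
    have := h {0} {0, 1} (by simp [MEx])
    simp [tEx, pEx] at this
    norm_num at this
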